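/- Requiring that the map α_w sending (z^1, z^2, z^3, z^4) to (z^1 w^1 − z^2 w̄^2, z^1 w^2 + z^2 w̄^1, z^3 w^1 − z^4 w̄^2, z^3 w^2 + z^4 w̄^1) defines a *-algebra automorphism of A(S^7_{θ'}) for every w = (w^1, w^2) ∈ SU(2) forces the deformation parameters to satisfy λ'^{12} = λ'^{34} = 1 and λ'^{13} = λ'^{14} = λ'^{23} = λ'^{24}. -/

import Mathlib

noncomputable section
open Complex

namespace TGAmodel

/-- Twisted group algebra over ℤ² with twist parameter `q` on the unit circle. -/
def TGA (_q : Circle) : Type := (ℤ × ℤ) →₀ ℂ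

variable (q : Circle)

instance : AddCommGroup (TGA q) := inferInstanceAs (AddCommGroup ((ℤ × ℤ) →₀ ℂ))
instance : Module ℂ (TGA q) := inferInstanceAs (Module ℂ ((ℤ × ℤ) →₀ ℂ))

/-- basis element -/
def sg (m : ℤ × ℤ) (x : ℂ) : TGA q := Finsupp.single m x

/-- the twisting bicharacter -/
def sig (m n : ℤ × ℤ) : ℂ := ((q ^ (m.1 * n.2) : Circle) : ℂ)

/-- the star phase -/
def cc (m : ℤ × ℤ) : ℂ := ((q ^ (m.1 * m.2) : Circle) : ℂ)

lemma sg_add (m : ℤ × ℤ) (x y : ℂ) : sg q m (x + y) = sg q m x + sg q m y :=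
  Finsupp.single_add m x y

lemma smul_sg (r : ℂ) (m : ℤ × ℤ) (x : ℂ) : r • sg q m x = sg q m (r * x) :=
  Finsupp.smul_single' r m x

def mulSingle (m : ℤ × ℤ) : TGA q →ₗ[ℂ] TGA q :=
  Finsupp.lsum ℂ fun n => sig q m n • (Finsupp.lsingle (m + n) : ℂ →ₗ[ℂ] TGA q)

def mulL : TGA q →ₗ[ℂ] TGA q →ₗ[ℂ] TGA q :=
  Finsupp.lsum ℂ fun m => LinearMap.toSpanSingleton ℂ (TGA q →ₗ[ℂ] TGA q) (mulSingle q m)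

lemma mulL_sg_sg (m n : ℤ × ℤ) (x y : ℂ) :
    mulL q (sg q m x) (sg q n y) = sg q (m + n) (sig q m n * (x * y)) := by
  rw [mulL]
  erw [Finsupp.lsum_single]
  rw [LinearMap.toSpanSingleton_apply, LinearMap.smul_apply, mulSingle]
  erw [Finsupp.lsum_single]
  show x • (sig q m n • (sg q (m+n) y)) = _
  rw [smul_smul, smul_sg]
  congr 1
  ring


theorem tga_ind {p : TGA q → Prop} (h0 : p 0)
    (hadd : ∀ a b, p a → p b → p (a + b))
    (hs : ∀ m x, p (sg q m x)) (a : TGA q) : p a :=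
  Finsupp.induction_linear a h0 hadd hs

lemma sig_zero_left (n : ℤ × ℤ) : sig q 0 n = 1 := by
  simp [sig]

lemma sig_zero_right (n : ℤ × ℤ) : sig q n 0 = 1 := by
  simp [sig]

lemma sig_assoc (m n p : ℤ × ℤ) :
    sig q m n * sig q (m + n) p = sig q n p * sig q m (n + p) := by
  unfold sig
  rw [← Circle.coe_mul, ← Circle.coe_mul, ← zpow_add, ← zpow_add]
  congr 2
  simp [Prod.fst_add, Prod.snd_add]
  ring

lemma mul_assoc' (a b c : TGA q) :
    mulL q (mulL q a b) c = mulL q a (mulL q b c) := by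
  refine tga_ind q (p := fun a => ∀ b c, mulL q (mulL q a b) c = mulL q a (mulL q b c))
    ?_ ?_ ?_ a b c
  · intro b c
    simp only [map_zero, LinearMap.zero_apply]
  · intro a a' ha ha' b c
    simp only [map_add, LinearMap.add_apply, ha, ha']
  · intro m x b c
    refine tga_ind q (p := fun b => ∀ c,
      mulL q (mulL q (sg q m x) b) c = mulL q (sg q m x) (mulL q b c)) ?_ ?_ ?_ b c
    · intro c
      simp only [map_zero, LinearMap.zero_apply]
    · intro b b' hb hb' c
      simp only [map_add, LinearMap.add_apply, hb, hb']
    · intro n y c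
      refine tga_ind q (p := fun c =>
        mulL q (mulL q (sg q m x) (sg q n y)) c
          = mulL q (sg q m x) (mulL q (sg q n y) c)) ?_ ?_ ?_ c
      · simp only [map_zero]
      · intro c c' hc hc'
        simp only [map_add, hc, hc']
      · intro p zz
        rw [mulL_sg_sg, mulL_sg_sg, mulL_sg_sg, mulL_sg_sg, add_assoc]
        congr 1
        linear_combination (x * y * zz) * sig_assoc q m n p

lemma one_mul' (a : TGA q) : mulL q (sg q 0 1) a = a := by
  refine tga_ind q (p := fun a => mulL q (sg q 0 1) a = a) ?_ ?_ ?_ a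
  · simp only [map_zero]
  · intro a a' ha ha'
    simp only [map_add, ha, ha']
  · intro m x
    rw [mulL_sg_sg, sig_zero_left, zero_add, one_mul, one_mul]

lemma mul_one' (a : TGA q) : mulL q a (sg q 0 1) = a := by
  refine tga_ind q (p := fun a => mulL q a (sg q 0 1) = a) ?_ ?_ ?_ a
  · simp only [map_zero, LinearMap.zero_apply]
  · intro a a' ha ha'
    simp only [map_add, LinearMap.add_apply, ha, ha']
  · intro m x
    rw [mulL_sg_sg, sig_zero_right, add_zero, one_mul, mul_one]

instance instRing : Ring (TGA q) where
  __ := (inferInstance : AddCommGroup (TGA q))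
  mul a b := mulL q a b
  left_distrib a b c := map_add (mulL q a) b c
  right_distrib a b c := by
    show mulL q (a + b) c = mulL q a c + mulL q b c
    rw [map_add, LinearMap.add_apply]
  zero_mul a := by
    show mulL q 0 a = 0
    rw [map_zero, LinearMap.zero_apply]
  mul_zero a := map_zero (mulL q a)
  one := sg q 0 1
  mul_assoc a b c := mul_assoc' q a b c
  one_mul a := one_mul' q a
  mul_one a := mul_one' q a

lemma mul_def (a b : TGA q) : a * b = mulL q a b := rfl

lemma one_def : (1 : TGA q) = sg q 0 1 := rfl

lemma sg_mul_sg (m n : ℤ × ℤ) (x y : ℂ) :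
    sg q m x * sg q n y = sg q (m + n) (sig q m n * (x * y)) :=
  mulL_sg_sg q m n x y

instance instAlgebra : Algebra ℂ (TGA q) :=
  Algebra.ofModule
    (fun r a b => by
      show mulL q (r • a) b = r • mulL q a b
      rw [map_smul]; rfl)
    (fun r a b => map_smul (mulL q a) r b)

/-- the star operation -/
def star' (a : TGA q) : TGA q :=
  (a : (ℤ × ℤ) →₀ ℂ).sum fun m x => sg q (-m) (cc q m * (starRingEnd ℂ) x)

lemma star'_sg (m : ℤ × ℤ) (x : ℂ) :
    star' q (sg q m x) = sg q (-m) (cc q m * (starRingEnd ℂ) x) := by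
  unfold star'
  refine Finsupp.sum_single_index ?_
  simp [sg]
  rfl

lemma star'_zero : star' q 0 = 0 := by
  unfold star'
  exact Finsupp.sum_zero_index

lemma star'_add (a b : TGA q) : star' q (a + b) = star' q a + star' q b := by
  unfold star'
  refine Finsupp.sum_add_index' ?_ ?_
  · intro m
    simp [sg]
    rfl
  · intro m x y
    rw [map_add, mul_add, sg_add]

lemma cc_neg (m : ℤ × ℤ) : cc q (-m) = cc q m := by
  unfold cc
  congr 2
  simp

lemma conj_coe (w : Circle) : (starRingEnd ℂ) (w : ℂ) = ((w⁻¹ : Circle) : ℂ) :=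
  (Circle.coe_inv_eq_conj w).symm

lemma conj_cc (m : ℤ × ℤ) : (starRingEnd ℂ) (cc q m) * cc q m = 1 := by
  unfold cc
  rw [conj_coe, ← Circle.coe_mul, inv_mul_cancel, Circle.coe_one]

lemma star'_star' (a : TGA q) : star' q (star' q a) = a := by
  refine tga_ind q (p := fun a => star' q (star' q a) = a) ?_ ?_ ?_ a
  · show star' q (star' q 0) = 0
    rw [star'_zero, star'_zero]
  · intro a a' ha ha'
    rw [star'_add, star'_add, ha, ha']
  · intro m x
    rw [star'_sg, star'_sg, neg_neg, cc_neg, map_mul, Complex.conj_conj]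
    congr 1
    linear_combination x * conj_cc q m

lemma star'_mul (a b : TGA q) : star' q (a * b) = star' q b * star' q a := by
  refine tga_ind q (p := fun a => ∀ b, star' q (a * b) = star' q b * star' q a) ?_ ?_ ?_ a b
  · intro b
    rw [star'_zero, zero_mul, star'_zero, mul_zero]
  · intro a a' ha ha' b
    rw [add_mul, star'_add, star'_add, mul_add, ha, ha']
  · intro m x b
    refine tga_ind q (p := fun b => star' q (sg q m x * b) = star' q b * star' q (sg q m x))
      ?_ ?_ ?_ b
    · show star' q (sg q m x * 0) = star' q 0 * star' q (sg q m x)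
      rw [mul_zero, star'_zero, zero_mul]
    · intro b b' hb hb'
      rw [mul_add, star'_add, star'_add, add_mul, hb, hb']
    · intro n y
      rw [sg_mul_sg, star'_sg, star'_sg, star'_sg, sg_mul_sg]
      rw [neg_add_rev]
      congr 1
      have key : cc q (m + n) * (starRingEnd ℂ) (sig q m n)
          = sig q (-n) (-m) * (cc q n * cc q m) := by
        unfold cc sig
        rw [conj_coe, ← Circle.coe_mul, ← Circle.coe_mul, ← Circle.coe_mul, ← zpow_neg,
          ← zpow_add, ← zpow_add, ← zpow_add]
        congr 2
        simp [Prod.fst_add, Prod.snd_add]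
        ring
      calc cc q (m + n) * (starRingEnd ℂ) (sig q m n * (x * y))
          = (cc q (m + n) * (starRingEnd ℂ) (sig q m n))
            * ((starRingEnd ℂ) x * (starRingEnd ℂ) y) := by
            rw [map_mul, map_mul]; ring
        _ = (sig q (-n) (-m) * (cc q n * cc q m))
            * ((starRingEnd ℂ) x * (starRingEnd ℂ) y) := by rw [key]
        _ = sig q (-n) (-m) * (cc q n * (starRingEnd ℂ) y * (cc q m * (starRingEnd ℂ) x)) := by
            ring

instance instStarRing : StarRing (TGA q) where
  star := star' q
  star_involutive := star'_star' q
  star_mul := star'_mul q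
  star_add := star'_add q

lemma star_sg (m : ℤ × ℤ) (x : ℂ) :
    star (sg q m x) = sg q (-m) (cc q m * (starRingEnd ℂ) x) := star'_sg q m x

instance instStarModule : StarModule ℂ (TGA q) where
  star_smul r a := by
    refine tga_ind q (p := fun a => star (r • a) = (starRingEnd ℂ) r • star a) ?_ ?_ ?_ a
    · show star (r • (0 : TGA q)) = (starRingEnd ℂ) r • star (0 : TGA q)
      rw [smul_zero, star_zero, smul_zero]
    · intro a a' ha ha'
      rw [smul_add, star_add, ha, ha', star_add, smul_add]
    · intro m x
      rw [smul_sg, star_sg, star_sg, smul_sg, map_mul]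
      congr 1
      ring

def U : TGA q := sg q (1, 0) 1
def V : TGA q := sg q (0, 1) 1

lemma sig_eval (a b c d : ℤ) : sig q (a, b) (c, d) = ((q ^ (a * d) : Circle) : ℂ) := rfl
lemma cc_eval (a b : ℤ) : cc q (a, b) = ((q ^ (a * b) : Circle) : ℂ) := rfl

lemma U_mul_V : U q * V q = sg q (1, 1) (q : ℂ) := by
  rw [U, V, sg_mul_sg, sig_eval]
  norm_num

lemma V_mul_U : V q * U q = sg q (1, 1) 1 := by
  rw [U, V, sg_mul_sg, sig_eval]
  norm_num

lemma U_mul_U : U q * U q = sg q (2, 0) 1 := by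
  rw [U, sg_mul_sg, sig_eval]
  norm_num

lemma V_mul_V : V q * V q = sg q (0, 2) 1 := by
  rw [V, sg_mul_sg, sig_eval]
  norm_num

lemma star_U : star (U q) = sg q (-1, 0) 1 := by
  rw [U, star_sg, cc_eval]
  norm_num

lemma star_V : star (V q) = sg q (0, -1) 1 := by
  rw [V, star_sg, cc_eval]
  norm_num

lemma U_mul_starU : U q * star (U q) = 1 := by
  rw [star_U, U, sg_mul_sg, sig_eval, one_def]
  norm_num
  rfl

lemma starU_mul_U : star (U q) * U q = 1 := by
  rw [star_U, U, sg_mul_sg, sig_eval, one_def]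
  norm_num
  rfl

lemma V_mul_starV : V q * star (V q) = 1 := by
  rw [star_V, V, sg_mul_sg, sig_eval, one_def]
  norm_num
  rfl

lemma starV_mul_V : star (V q) * V q = 1 := by
  rw [star_V, V, sg_mul_sg, sig_eval, one_def]
  norm_num
  rfl

lemma starU_mul_V : star (U q) * V q = sg q (-1, 1) (((q : ℂ))⁻¹) := by
  rw [star_U, V, sg_mul_sg, sig_eval]
  norm_num

lemma V_mul_starU : V q * star (U q) = sg q (-1, 1) 1 := by
  rw [star_U, V, sg_mul_sg, sig_eval]
  norm_num

lemma starV_mul_U : star (V q) * U q = sg q (1, -1) 1 := by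
  rw [star_V, U, sg_mul_sg, sig_eval]
  norm_num

lemma U_mul_starV : U q * star (V q) = sg q (1, -1) (((q : ℂ))⁻¹) := by
  rw [star_V, U, sg_mul_sg, sig_eval]
  norm_num

lemma starU_mul_starV : star (U q) * star (V q) = sg q (-1, -1) (q : ℂ) := by
  rw [star_U, star_V, sg_mul_sg, sig_eval]
  norm_num

lemma starV_mul_starU : star (V q) * star (U q) = sg q (-1, -1) 1 := by
  rw [star_U, star_V, sg_mul_sg, sig_eval]
  norm_num

/-- coefficient extraction -/
def coeff (a : TGA q) (m : ℤ × ℤ) : ℂ := (show (ℤ × ℤ) →₀ ℂ from a) m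

lemma coeff_sg (m n : ℤ × ℤ) (x : ℂ) :
    coeff q (sg q m x) n = if m = n then x else 0 := Finsupp.single_apply

lemma coeff_add (a b : TGA q) (m : ℤ × ℤ) :
    coeff q (a + b) m = coeff q a m + coeff q b m := rfl

lemma coeff_sub (a b : TGA q) (m : ℤ × ℤ) :
    coeff q (a - b) m = coeff q a m - coeff q b m := rfl

lemma coeff_smul (r : ℂ) (a : TGA q) (m : ℤ × ℤ) :
    coeff q (r • a) m = r * coeff q a m := rfl

lemma coeff_zero (m : ℤ × ℤ) : coeff q (0 : TGA q) m = 0 := rfl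

lemma coeff_neg (a : TGA q) (m : ℤ × ℤ) : coeff q (-a) m = -coeff q a m := rfl

/-! ### the model elements -/

def rc : ℂ := ((Real.sqrt 2)⁻¹ : ℝ)

lemma rr_mul : ((Real.sqrt 2)⁻¹ * (Real.sqrt 2)⁻¹ : ℝ) = 1 / 2 := by
  rw [← mul_inv, Real.mul_self_sqrt (by norm_num : (0:ℝ) ≤ 2)]
  norm_num

lemma rc_conj : star rc = rc := Complex.conj_ofReal _

lemma rc_mul_rc : rc * rc = 1 / 2 := by
  rw [rc, ← Complex.ofReal_mul, rr_mul]
  norm_num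

lemma rc_ne : rc ≠ 0 := by
  rw [rc]
  norm_num

lemma rc_normSq : Complex.normSq rc + Complex.normSq rc = 1 := by
  rw [rc, Complex.normSq_ofReal, rr_mul]
  norm_num

def vv (q : Circle) (i0 j0 : Fin 4) (k : Fin 4) : TGA q :=
  if k = i0 then rc • U q else if k = j0 then rc • V q else 0

lemma vv_i0 (q : Circle) (i0 j0 : Fin 4) : vv q i0 j0 i0 = rc • U q := by simp [vv]

lemma vv_j0 (q : Circle) (i0 j0 : Fin 4) (hne : i0 ≠ j0) : vv q i0 j0 j0 = rc • V q := by
  simp [vv, Ne.symm hne]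

lemma vv_other (q : Circle) (i0 j0 : Fin 4) (k : Fin 4) (h1 : k ≠ i0) (h2 : k ≠ j0) :
    vv q i0 j0 k = 0 := by simp [vv, h1, h2]

lemma modelRel (lam' : Fin 4 → Fin 4 → ℂ)
    (hinv : ∀ i j, lam' j i = (lam' i j)⁻¹) (hdiag : ∀ i, lam' i i = 1)
    (i0 j0 : Fin 4) (hne : i0 ≠ j0) (q : Circle) (hq : (q : ℂ) = lam' i0 j0) :
    (∀ i j, vv q i0 j0 i * vv q i0 j0 j = lam' i j • (vv q i0 j0 j * vv q i0 j0 i)) ∧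
    (∀ i j, star (vv q i0 j0 i) * vv q i0 j0 j
      = lam' j i • (vv q i0 j0 j * star (vv q i0 j0 i))) ∧
    (∀ i j, star (vv q i0 j0 i) * star (vv q i0 j0 j)
      = lam' i j • (star (vv q i0 j0 j) * star (vv q i0 j0 i))) ∧
    (∑ i, vv q i0 j0 i * star (vv q i0 j0 i)) = 1 := by
  have qne : (q : ℂ) ≠ 0 := Circle.coe_ne_zero q
  have hq' : lam' j0 i0 = ((q : ℂ))⁻¹ := by rw [hinv, hq]
  set u : TGA q := rc • U q with hu
  set v : TGA q := rc • V q with hv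
  have su : star u = rc • star (U q) := by rw [hu, star_smul, rc_conj]
  have sv : star v = rc • star (V q) := by rw [hv, star_smul, rc_conj]
  have euv : u * v = sg q (1, 1) (rc * (rc * (q : ℂ))) := by
    rw [hu, hv, smul_mul_assoc, mul_smul_comm, U_mul_V, smul_sg, smul_sg]
  have evu : v * u = sg q (1, 1) (rc * (rc * 1)) := by
    rw [hu, hv, smul_mul_assoc, mul_smul_comm, V_mul_U, smul_sg, smul_sg]
  have esuv : star u * v = sg q (-1, 1) (rc * (rc * ((q : ℂ))⁻¹)) := by
    rw [su, hv, smul_mul_assoc, mul_smul_comm, starU_mul_V, smul_sg, smul_sg]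
  have evsu : v * star u = sg q (-1, 1) (rc * (rc * 1)) := by
    rw [su, hv, smul_mul_assoc, mul_smul_comm, V_mul_starU, smul_sg, smul_sg]
  have esvu : star v * u = sg q (1, -1) (rc * (rc * 1)) := by
    rw [sv, hu, smul_mul_assoc, mul_smul_comm, starV_mul_U, smul_sg, smul_sg]
  have eusv : u * star v = sg q (1, -1) (rc * (rc * ((q : ℂ))⁻¹)) := by
    rw [sv, hu, smul_mul_assoc, mul_smul_comm, U_mul_starV, smul_sg, smul_sg]
  have esusv : star u * star v = sg q (-1, -1) (rc * (rc * (q : ℂ))) := by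
    rw [su, sv, smul_mul_assoc, mul_smul_comm, starU_mul_starV, smul_sg, smul_sg]
  have esvsu : star v * star u = sg q (-1, -1) (rc * (rc * 1)) := by
    rw [su, sv, smul_mul_assoc, mul_smul_comm, starV_mul_starU, smul_sg, smul_sg]
  have eusu : u * star u = (rc * rc) • 1 := by
    rw [su, hu, smul_mul_assoc, mul_smul_comm, U_mul_starU, smul_smul]
  have esuu : star u * u = (rc * rc) • 1 := by
    rw [su, hu, smul_mul_assoc, mul_smul_comm, starU_mul_U, smul_smul]
  have evsv : v * star v = (rc * rc) • 1 := by
    rw [sv, hv, smul_mul_assoc, mul_smul_comm, V_mul_starV, smul_smul]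
  have esvv : star v * v = (rc * rc) • 1 := by
    rw [sv, hv, smul_mul_assoc, mul_smul_comm, starV_mul_V, smul_smul]
  refine ⟨?_, ?_, ?_, ?_⟩
  · intro i j
    rcases eq_or_ne i j with rfl | hij
    · rw [hdiag, one_smul]
    rcases eq_or_ne i i0 with hi | hii0
    · rw [hi]
      rcases eq_or_ne j j0 with hj | hjj0
      · rw [hj, vv_i0, vv_j0 q i0 j0 hne, ← hu, ← hv, euv, evu, smul_sg, ← hq]
        congr 1; ring
      · rw [vv_other q i0 j0 j (fun h => hij (hi.trans h.symm)) hjj0, mul_zero, zero_mul,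
          smul_zero]
    rcases eq_or_ne i j0 with hi | hij0
    · rw [hi]
      rcases eq_or_ne j i0 with hj | hji0
      · rw [hj, vv_i0, vv_j0 q i0 j0 hne, ← hu, ← hv, evu, euv, hq', smul_sg]
        congr 1
        field_simp
      · rw [vv_other q i0 j0 j hji0 (fun h => hij (hi.trans h.symm)), mul_zero, zero_mul,
          smul_zero]
    · rw [vv_other q i0 j0 i hii0 hij0, zero_mul, mul_zero, smul_zero]
  · intro i j
    rcases eq_or_ne i i0 with hi | hii0
    · rw [hi]
      rcases eq_or_ne j i0 with hj | hji0
      · rw [hj, vv_i0, ← hu, esuu, eusu, hdiag, one_smul]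
      rcases eq_or_ne j j0 with hj | hjj0
      · rw [hj, vv_i0, vv_j0 q i0 j0 hne, ← hu, ← hv, esuv, evsu, hq', smul_sg]
        congr 1; ring
      · rw [vv_other q i0 j0 j hji0 hjj0, mul_zero, zero_mul, smul_zero]
    rcases eq_or_ne i j0 with hi | hij0
    · rw [hi]
      rcases eq_or_ne j j0 with hj | hjj0
      · rw [hj, vv_j0 q i0 j0 hne, ← hv, esvv, evsv, hdiag, one_smul]
      rcases eq_or_ne j i0 with hj | hji0
      · rw [hj, vv_i0, vv_j0 q i0 j0 hne, ← hu, ← hv, esvu, eusv, ← hq, smul_sg]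
        congr 1
        field_simp
      · rw [vv_other q i0 j0 j hji0 hjj0, mul_zero, zero_mul, smul_zero]
    · rw [vv_other q i0 j0 i hii0 hij0, star_zero, zero_mul, mul_zero, smul_zero]
  · intro i j
    rcases eq_or_ne i j with rfl | hij
    · rw [hdiag, one_smul]
    rcases eq_or_ne i i0 with hi | hii0
    · rw [hi]
      rcases eq_or_ne j j0 with hj | hjj0
      · rw [hj, vv_i0, vv_j0 q i0 j0 hne, ← hu, ← hv, esusv, esvsu, smul_sg, ← hq]
        congr 1; ring
      · rw [vv_other q i0 j0 j (fun h => hij (hi.trans h.symm)) hjj0, star_zero, mul_zero,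
          zero_mul, smul_zero]
    rcases eq_or_ne i j0 with hi | hij0
    · rw [hi]
      rcases eq_or_ne j i0 with hj | hji0
      · rw [hj, vv_i0, vv_j0 q i0 j0 hne, ← hu, ← hv, esusv, esvsu, hq', smul_sg]
        congr 1
        field_simp
      · rw [vv_other q i0 j0 j hji0 (fun h => hij (hi.trans h.symm)), star_zero, mul_zero,
          zero_mul, smul_zero]
    · rw [vv_other q i0 j0 i hii0 hij0, star_zero, zero_mul, mul_zero, smul_zero]
  · have hterm : ∀ k : Fin 4, vv q i0 j0 k * star (vv q i0 j0 k)
        = (if k = i0 then (rc * rc) • (1 : TGA q) else 0)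
          + (if k = j0 then (rc * rc) • (1 : TGA q) else 0) := by
      intro k
      rcases eq_or_ne k i0 with hk | hki0
      · rw [hk, vv_i0, ← hu, eusu, if_pos rfl, if_neg hne, add_zero]
      rcases eq_or_ne k j0 with hk | hkj0
      · rw [hk, vv_j0 q i0 j0 hne, ← hv, evsv, if_neg (hk ▸ hki0), if_pos rfl, zero_add]
      · rw [vv_other q i0 j0 k hki0 hkj0, zero_mul, if_neg hki0, if_neg hkj0, add_zero]
    rw [Finset.sum_congr rfl fun k _ => hterm k, Finset.sum_add_distrib,
      Finset.sum_ite_eq' Finset.univ i0 (fun _ => (rc * rc) • (1 : TGA q)),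
      Finset.sum_ite_eq' Finset.univ j0 (fun _ => (rc * rc) • (1 : TGA q))]
    simp only [Finset.mem_univ, if_pos]
    rw [← add_smul, rc_mul_rc]
    norm_num

end TGAmodel


/-- Requiring that α_w : (z^1,z^2,z^3,z^4) ↦ (z^1w^1 − z^2w̄^2, z^1w^2 + z^2w̄^1,
z^3w^1 − z^4w̄^2, z^3w^2 + z^4w̄^1) is a *-algebra automorphism of A(S^7_{θ'}) for every
w ∈ SU(2) forces λ'^{12} = λ'^{34} = 1 and λ'^{13} = λ'^{14} = λ'^{23} = λ'^{24}.
A(S^7_{θ'}) is encoded by its generators, relations and universal property. -/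
theorem stmt4 (lam' : Fin 4 → Fin 4 → ℂ)
    (hunit : ∀ i j, ‖lam' i j‖ = 1)
    (hinv : ∀ i j, lam' j i = (lam' i j)⁻¹)
    (hdiag : ∀ i, lam' i i = 1)
    (A : Type) [Ring A] [Algebra ℂ A] [StarRing A] [StarModule ℂ A]
    (z : Fin 4 → A)
    (h1 : ∀ i j, z i * z j = lam' i j • (z j * z i))
    (h2 : ∀ i j, star (z i) * z j = lam' j i • (z j * star (z i)))
    (h3 : ∀ i j, star (z i) * star (z j) = lam' i j • (star (z j) * star (z i)))
    (hsph : (∑ i, z i * star (z i)) = 1)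
    (huniv : ∀ (B : Type) [Ring B] [Algebra ℂ B] [StarRing B] [StarModule ℂ B]
      (v : Fin 4 → B),
      (∀ i j, v i * v j = lam' i j • (v j * v i)) →
      (∀ i j, star (v i) * v j = lam' j i • (v j * star (v i))) →
      (∀ i j, star (v i) * star (v j) = lam' i j • (star (v j) * star (v i))) →
      (∑ i, v i * star (v i)) = 1 →
      ∃! f : A →⋆ₐ[ℂ] B, ∀ i, f (z i) = v i)
    (haction : ∀ w₁ w₂ : ℂ, Complex.normSq w₁ + Complex.normSq w₂ = 1 →
      ∃ f : A ≃⋆ₐ[ℂ] A,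
        f (z 0) = w₁ • z 0 - (starRingEnd ℂ w₂) • z 1 ∧
        f (z 1) = w₂ • z 0 + (starRingEnd ℂ w₁) • z 1 ∧
        f (z 2) = w₁ • z 2 - (starRingEnd ℂ w₂) • z 3 ∧
        f (z 3) = w₂ • z 2 + (starRingEnd ℂ w₁) • z 3) :
    lam' 0 1 = 1 ∧ lam' 2 3 = 1 ∧
    lam' 0 2 = lam' 0 3 ∧ lam' 0 3 = lam' 1 2 ∧ lam' 1 2 = lam' 1 3 := by
  classical
  obtain ⟨f, hf0, hf1, hf2, hf3⟩ := haction TGAmodel.rc TGAmodel.rc TGAmodel.rc_normSq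
  have rcc : (starRingEnd ℂ) TGAmodel.rc = TGAmodel.rc := Complex.conj_ofReal _
  rw [rcc] at hf0 hf1 hf2 hf3
  -- Pair (0,1) : lam' 0 1 = 1
  have key01 : lam' 0 1 = 1 := by
    have hmem : (lam' 0 1) ∈ Metric.sphere (0:ℂ) 1 :=
      mem_sphere_zero_iff_norm.mpr (hunit 0 1)
    set q : Circle := ⟨lam' 0 1, hmem⟩ with hqdef
    have hq : (q : ℂ) = lam' 0 1 := rfl
    obtain ⟨R1, R2, R3, R4⟩ :=
      TGAmodel.modelRel lam' hinv hdiag 0 1 (by decide) q hq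
    obtain ⟨g, hg, -⟩ := huniv (TGAmodel.TGA q) (TGAmodel.vv q 0 1) R1 R2 R3 R4
    have eA := congrArg (⇑f) (h1 0 1)
    rw [map_mul, map_smul, map_mul, hf0, hf1] at eA
    have eB := congrArg (⇑g) eA
    simp only [map_mul, map_smul, map_sub, map_add, hg] at eB
    rw [TGAmodel.vv_i0, TGAmodel.vv_j0 q 0 1 (by decide)] at eB
    rw [sub_mul, mul_add, mul_add, add_mul, mul_sub, mul_sub] at eB
    simp only [smul_mul_assoc, mul_smul_comm, TGAmodel.U_mul_U, TGAmodel.U_mul_V,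
      TGAmodel.V_mul_U, TGAmodel.V_mul_V] at eB
    have eC := congrArg (fun t => TGAmodel.coeff q t (2, 0)) eB
    simp only [TGAmodel.coeff_add, TGAmodel.coeff_sub, TGAmodel.coeff_smul,
      TGAmodel.coeff_sg, TGAmodel.coeff_zero] at eC
    norm_num [Prod.ext_iff, Prod.fst_one, Prod.snd_one] at eC
    have h := TGAmodel.rc_ne
    have hX : TGAmodel.rc * (TGAmodel.rc * (TGAmodel.rc * TGAmodel.rc)) ≠ 0 :=
      mul_ne_zero h (mul_ne_zero h (mul_ne_zero h h))
    have e2 : lam' 0 1 * (TGAmodel.rc * (TGAmodel.rc * (TGAmodel.rc * TGAmodel.rc)))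
        = 1 * (TGAmodel.rc * (TGAmodel.rc * (TGAmodel.rc * TGAmodel.rc))) := by
      rw [one_mul, ← eC]
    exact mul_right_cancel₀ hX e2
  -- Pair (2,3) : lam' 2 3 = 1
  have key23 : lam' 2 3 = 1 := by
    have hmem : (lam' 2 3) ∈ Metric.sphere (0:ℂ) 1 :=
      mem_sphere_zero_iff_norm.mpr (hunit 2 3)
    set q : Circle := ⟨lam' 2 3, hmem⟩ with hqdef
    have hq : (q : ℂ) = lam' 2 3 := rfl
    obtain ⟨R1, R2, R3, R4⟩ :=
      TGAmodel.modelRel lam' hinv hdiag 2 3 (by decide) q hq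
    obtain ⟨g, hg, -⟩ := huniv (TGAmodel.TGA q) (TGAmodel.vv q 2 3) R1 R2 R3 R4
    have eA := congrArg (⇑f) (h1 2 3)
    rw [map_mul, map_smul, map_mul, hf2, hf3] at eA
    have eB := congrArg (⇑g) eA
    simp only [map_mul, map_smul, map_sub, map_add, hg] at eB
    rw [TGAmodel.vv_i0, TGAmodel.vv_j0 q 2 3 (by decide)] at eB
    rw [sub_mul, mul_add, mul_add, add_mul, mul_sub, mul_sub] at eB
    simp only [smul_mul_assoc, mul_smul_comm, TGAmodel.U_mul_U, TGAmodel.U_mul_V,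
      TGAmodel.V_mul_U, TGAmodel.V_mul_V] at eB
    have eC := congrArg (fun t => TGAmodel.coeff q t (2, 0)) eB
    simp only [TGAmodel.coeff_add, TGAmodel.coeff_sub, TGAmodel.coeff_smul,
      TGAmodel.coeff_sg, TGAmodel.coeff_zero] at eC
    norm_num [Prod.ext_iff, Prod.fst_one, Prod.snd_one] at eC
    have h := TGAmodel.rc_ne
    have hX : TGAmodel.rc * (TGAmodel.rc * (TGAmodel.rc * TGAmodel.rc)) ≠ 0 :=
      mul_ne_zero h (mul_ne_zero h (mul_ne_zero h h))
    have e2 : lam' 2 3 * (TGAmodel.rc * (TGAmodel.rc * (TGAmodel.rc * TGAmodel.rc)))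
        = 1 * (TGAmodel.rc * (TGAmodel.rc * (TGAmodel.rc * TGAmodel.rc))) := by
      rw [one_mul, ← eC]
    exact mul_right_cancel₀ hX e2
  -- cross pairs
  have key03 : lam' 0 3 = lam' 0 2 := by
    have hmem : (lam' 0 3) ∈ Metric.sphere (0:ℂ) 1 :=
      mem_sphere_zero_iff_norm.mpr (hunit 0 3)
    set q : Circle := ⟨lam' 0 3, hmem⟩ with hqdef
    have hq : (q : ℂ) = lam' 0 3 := rfl
    obtain ⟨R1, R2, R3, R4⟩ :=
      TGAmodel.modelRel lam' hinv hdiag 0 3 (by decide) q hq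
    obtain ⟨g, hg, -⟩ := huniv (TGAmodel.TGA q) (TGAmodel.vv q 0 3) R1 R2 R3 R4
    have eA := congrArg (⇑f) (h1 0 2)
    rw [map_mul, map_smul, map_mul, hf0, hf2] at eA
    have eB := congrArg (⇑g) eA
    simp only [map_mul, map_smul, map_sub, map_add, hg] at eB
    rw [TGAmodel.vv_i0, TGAmodel.vv_j0 q 0 3 (by decide),
      TGAmodel.vv_other q 0 3 1 (by decide) (by decide),
      TGAmodel.vv_other q 0 3 2 (by decide) (by decide)] at eB
    simp only [smul_zero, sub_zero, zero_sub, neg_mul, mul_neg, smul_mul_assoc,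
      mul_smul_comm, TGAmodel.U_mul_V, TGAmodel.V_mul_U, smul_neg, neg_neg] at eB
    have eC := congrArg (fun t => TGAmodel.coeff q t (1, 1)) eB
    simp only [TGAmodel.coeff_add, TGAmodel.coeff_sub, TGAmodel.coeff_smul,
      TGAmodel.coeff_sg, TGAmodel.coeff_zero, TGAmodel.coeff_neg] at eC
    norm_num [Prod.ext_iff, Prod.fst_one, Prod.snd_one] at eC
    have h := TGAmodel.rc_ne
    have hX : TGAmodel.rc * (TGAmodel.rc * (TGAmodel.rc * TGAmodel.rc)) ≠ 0 :=
      mul_ne_zero h (mul_ne_zero h (mul_ne_zero h h))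
    have e2 : lam' 0 3 * (TGAmodel.rc * (TGAmodel.rc * (TGAmodel.rc * TGAmodel.rc)))
        = lam' 0 2 * (TGAmodel.rc * (TGAmodel.rc * (TGAmodel.rc * TGAmodel.rc))) := by
      linear_combination eC
    exact mul_right_cancel₀ hX e2
  have key12 : lam' 1 2 = lam' 0 2 := by
    have hmem : (lam' 1 2) ∈ Metric.sphere (0:ℂ) 1 :=
      mem_sphere_zero_iff_norm.mpr (hunit 1 2)
    set q : Circle := ⟨lam' 1 2, hmem⟩ with hqdef
    have hq : (q : ℂ) = lam' 1 2 := rfl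
    obtain ⟨R1, R2, R3, R4⟩ :=
      TGAmodel.modelRel lam' hinv hdiag 1 2 (by decide) q hq
    obtain ⟨g, hg, -⟩ := huniv (TGAmodel.TGA q) (TGAmodel.vv q 1 2) R1 R2 R3 R4
    have eA := congrArg (⇑f) (h1 0 2)
    rw [map_mul, map_smul, map_mul, hf0, hf2] at eA
    have eB := congrArg (⇑g) eA
    simp only [map_mul, map_smul, map_sub, map_add, hg] at eB
    rw [TGAmodel.vv_i0, TGAmodel.vv_j0 q 1 2 (by decide),
      TGAmodel.vv_other q 1 2 0 (by decide) (by decide),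
      TGAmodel.vv_other q 1 2 3 (by decide) (by decide)] at eB
    simp only [smul_zero, sub_zero, zero_sub, neg_mul, mul_neg, smul_mul_assoc,
      mul_smul_comm, TGAmodel.U_mul_V, TGAmodel.V_mul_U, smul_neg, neg_neg] at eB
    have eC := congrArg (fun t => TGAmodel.coeff q t (1, 1)) eB
    simp only [TGAmodel.coeff_add, TGAmodel.coeff_sub, TGAmodel.coeff_smul,
      TGAmodel.coeff_sg, TGAmodel.coeff_zero, TGAmodel.coeff_neg] at eC
    norm_num [Prod.ext_iff, Prod.fst_one, Prod.snd_one] at eC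
    have h := TGAmodel.rc_ne
    have hX : TGAmodel.rc * (TGAmodel.rc * (TGAmodel.rc * TGAmodel.rc)) ≠ 0 :=
      mul_ne_zero h (mul_ne_zero h (mul_ne_zero h h))
    have e2 : lam' 1 2 * (TGAmodel.rc * (TGAmodel.rc * (TGAmodel.rc * TGAmodel.rc)))
        = lam' 0 2 * (TGAmodel.rc * (TGAmodel.rc * (TGAmodel.rc * TGAmodel.rc))) := by
      linear_combination eC
    exact mul_right_cancel₀ hX e2
  have key13 : lam' 1 3 = lam' 0 2 := by
    have hmem : (lam' 1 3) ∈ Metric.sphere (0:ℂ) 1 :=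
      mem_sphere_zero_iff_norm.mpr (hunit 1 3)
    set q : Circle := ⟨lam' 1 3, hmem⟩ with hqdef
    have hq : (q : ℂ) = lam' 1 3 := rfl
    obtain ⟨R1, R2, R3, R4⟩ :=
      TGAmodel.modelRel lam' hinv hdiag 1 3 (by decide) q hq
    obtain ⟨g, hg, -⟩ := huniv (TGAmodel.TGA q) (TGAmodel.vv q 1 3) R1 R2 R3 R4
    have eA := congrArg (⇑f) (h1 0 2)
    rw [map_mul, map_smul, map_mul, hf0, hf2] at eA
    have eB := congrArg (⇑g) eA
    simp only [map_mul, map_smul, map_sub, map_add, hg] at eB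
    rw [TGAmodel.vv_i0, TGAmodel.vv_j0 q 1 3 (by decide),
      TGAmodel.vv_other q 1 3 0 (by decide) (by decide),
      TGAmodel.vv_other q 1 3 2 (by decide) (by decide)] at eB
    simp only [smul_zero, sub_zero, zero_sub, neg_mul, mul_neg, smul_mul_assoc,
      mul_smul_comm, TGAmodel.U_mul_V, TGAmodel.V_mul_U, smul_neg, neg_neg] at eB
    have eC := congrArg (fun t => TGAmodel.coeff q t (1, 1)) eB
    simp only [TGAmodel.coeff_add, TGAmodel.coeff_sub, TGAmodel.coeff_smul,
      TGAmodel.coeff_sg, TGAmodel.coeff_zero, TGAmodel.coeff_neg] at eC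
    norm_num [Prod.ext_iff, Prod.fst_one, Prod.snd_one] at eC
    have h := TGAmodel.rc_ne
    have hX : TGAmodel.rc * (TGAmodel.rc * (TGAmodel.rc * TGAmodel.rc)) ≠ 0 :=
      mul_ne_zero h (mul_ne_zero h (mul_ne_zero h h))
    have e2 : lam' 1 3 * (TGAmodel.rc * (TGAmodel.rc * (TGAmodel.rc * TGAmodel.rc)))
        = lam' 0 2 * (TGAmodel.rc * (TGAmodel.rc * (TGAmodel.rc * TGAmodel.rc))) := by
      linear_combination eC
    exact mul_right_cancel₀ hX e2
  exact ⟨key01, key23, key03.symm, key03.trans key12.symm, key12.trans key13.symm⟩
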